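/- Let (X, d_X, ν_X) and (Y, d_Y, ν_Y) be compact metric spaces equipped with Borel probability measures, and suppose their Gromov–Hausdorff–Prokhorov distance is strictly less than ε' > 0. Then for every ε > 0, the supremum over x ∈ X of ν_X of the open ε-ball around x is at most the supremum over y ∈ Y of ν_Y of the open (ε + 2ε')-ball around y, plus ε'. -/

import Mathlib

open MeasureTheory Metric Set

/-- If the GHP distance of two compact metric probability spaces is `< ε'`
(witnessed by isometric embeddings into a common space), then the largest mass
of open `ε`-balls in `X` is at most that of open `(ε + 2ε')`-balls in `Y`, plus `ε'`. -/
theorem largest_ball_mass_GHP_bound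
    (X Y : Type) [MetricSpace X] [CompactSpace X] [MetricSpace Y] [CompactSpace Y]
    [MeasurableSpace X] [BorelSpace X] [MeasurableSpace Y] [BorelSpace Y]
    (νX : Measure X) (νY : Measure Y)
    [IsProbabilityMeasure νX] [IsProbabilityMeasure νY]
    (ε' : ℝ) (hε' : 0 < ε')
    (h : ∃ (Z : Type) (_ : MetricSpace Z) (_ : MeasurableSpace Z) (_ : BorelSpace Z)
        (φ : X → Z) (ψ : Y → Z), Isometry φ ∧ Isometry ψ ∧
        hausdorffDist (Set.range φ) (Set.range ψ) < ε' ∧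
        levyProkhorovDist (νX.map φ) (νY.map ψ) < ε')
    (ε : ℝ) (hε : 0 < ε) :
    (⨆ x : X, νX (Metric.ball x ε)) ≤
      (⨆ y : Y, νY (Metric.ball y (ε + 2 * ε'))) + ENNReal.ofReal ε' := by
  obtain ⟨Z, _, _, _, φ, ψ, hφ, hψ, hH, hLP⟩ := h
  have hY : Nonempty Y := by
    by_contra hne
    rw [not_nonempty_iff] at hne
    have h1 : νY Set.univ = 1 := measure_univ
    rw [Set.univ_eq_empty_iff.mpr hne, measure_empty] at h1
    simp at h1
  have hX : Nonempty X := by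
    by_contra hne
    rw [not_nonempty_iff] at hne
    have h1 : νX Set.univ = 1 := measure_univ
    rw [Set.univ_eq_empty_iff.mpr hne, measure_empty] at h1
    simp at h1
  have hφm : Measurable φ := hφ.continuous.measurable
  have hψm : Measurable ψ := hψ.continuous.measurable
  have : IsProbabilityMeasure (νX.map φ) := Measure.isProbabilityMeasure_map hφm.aemeasurable
  have : IsProbabilityMeasure (νY.map ψ) := Measure.isProbabilityMeasure_map hψm.aemeasurable
  have hedist : levyProkhorovEDist (νX.map φ) (νY.map ψ) < ENNReal.ofReal ε' := by
    rw [← ENNReal.ofReal_toReal (levyProkhorovEDist_ne_top _ _)]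
    exact ENNReal.ofReal_lt_ofReal_iff_of_nonneg ENNReal.toReal_nonneg |>.mpr hLP
  refine iSup_le fun x => ?_
  -- find y close to φ x
  have hfin : EMetric.hausdorffEdist (Set.range φ) (Set.range ψ) ≠ ⊤ := by
    apply hausdorffEdist_ne_top_of_nonempty_of_bounded (range_nonempty φ) (range_nonempty ψ)
    · exact (isCompact_range hφ.continuous).isBounded
    · exact (isCompact_range hψ.continuous).isBounded
  obtain ⟨z, ⟨y, rfl⟩, hyz⟩ :=
    exists_dist_lt_of_hausdorffDist_lt (Set.mem_range_self x) hH hfin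
  have key := left_measure_le_of_levyProkhorovEDist_lt hedist
    (B := Metric.ball (φ x) ε) measurableSet_ball
  rw [Measure.map_apply hφm measurableSet_ball, hφ.preimage_ball] at key
  have hsub : Metric.thickening (ENNReal.ofReal ε').toReal (Metric.ball (φ x) ε)
      ⊆ Metric.ball (ψ y) (ε + 2 * ε') := by
    rw [ENNReal.toReal_ofReal hε'.le]
    intro z hz
    obtain ⟨w, hw, hzw⟩ := Metric.mem_thickening_iff.mp hz
    calc dist z (ψ y) ≤ dist z w + dist w (φ x) + dist (φ x) (ψ y) := dist_triangle4 z w (φ x) (ψ y)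
      _ < ε' + ε + ε' := by
          exact add_lt_add (add_lt_add hzw (Metric.mem_ball.mp hw)) hyz
      _ = ε + 2 * ε' := by ring
  have key2 : νX (Metric.ball x ε) ≤
      (νY.map ψ) (Metric.ball (ψ y) (ε + 2 * ε')) + ENNReal.ofReal ε' :=
    key.trans (add_le_add_left (measure_mono hsub) _)
  rw [Measure.map_apply hψm measurableSet_ball, hψ.preimage_ball] at key2
  exact key2.trans (add_le_add_left (le_iSup (fun y => νY (Metric.ball y (ε + 2 * ε'))) y) _)
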